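/- Let Q ⊆ [0,1] be a set of thresholds containing its infimum. Then S ⊆ N is a robust convention with respect to Q (i.e., a convention for every q ∈ Q) if and only if S is inf(Q)-closed and sup(Q)-cohesive. -/
import Mathlib


open Finset

/-- `S` is `q`-cohesive. -/
def Cohesive {V : Type*} [Fintype V] [DecidableEq V] (G : SimpleGraph V)
    [DecidableRel G.Adj] (q : ℝ) (S : Finset V) : Prop :=
  ∀ i ∈ S, q * (G.degree i : ℝ) ≤ ((G.neighborFinset i ∩ S).card : ℝ)

/-- `S` is `q`-closed. -/
def Closed {V : Type*} [Fintype V] [DecidableEq V] (G : SimpleGraph V)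
    [DecidableRel G.Adj] (q : ℝ) (S : Finset V) : Prop :=
  ∀ i ∉ S, ((G.neighborFinset i ∩ S).card : ℝ) < q * (G.degree i : ℝ)

/-- `S` is a convention for threshold `q`. -/
def Convention {V : Type*} [Fintype V] [DecidableEq V] (G : SimpleGraph V)
    [DecidableRel G.Adj] (q : ℝ) (S : Finset V) : Prop :=
  Cohesive G q S ∧ Closed G q S

theorem robust_convention_iff_infClosed_supCohesive
    {V : Type*} [Fintype V] [DecidableEq V] (G : SimpleGraph V) [DecidableRel G.Adj]
    (hdeg : ∀ i : V, 1 ≤ G.degree i)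
    (Q : Set ℝ) (hQsub : Q ⊆ Set.Icc (0 : ℝ) 1) (hQne : Q.Nonempty)
    (hInf : sInf Q ∈ Q) (S : Finset V) :
    (∀ q ∈ Q, Convention G q S) ↔ (Closed G (sInf Q) S ∧ Cohesive G (sSup Q) S) := by
  have hbdd : BddAbove Q := ⟨1, fun x hx => (hQsub hx).2⟩
  constructor
  · intro h
    refine ⟨(h _ hInf).2, ?_⟩
    intro i hi
    have hd : (0 : ℝ) < (G.degree i : ℝ) := by
      exact_mod_cast Nat.lt_of_lt_of_le Nat.zero_lt_one (hdeg i)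
    rw [← le_div_iff₀ hd]
    refine Real.sSup_le (fun q hq => ?_) ?_
    · rw [le_div_iff₀ hd]
      exact (h q hq).1 i hi
    · obtain ⟨q, hq⟩ := hQne
      exact le_trans (hQsub hq).1 ((le_div_iff₀ hd).2 ((h q hq).1 i hi))
  · rintro ⟨hcl, hco⟩ q hq
    have hd : ∀ i, (0 : ℝ) ≤ (G.degree i : ℝ) := fun i => Nat.cast_nonneg _
    constructor
    · intro i hi
      exact le_trans (mul_le_mul_of_nonneg_right (le_csSup hbdd hq) (hd i)) (hco i hi)
    · intro i hi
      exact lt_of_lt_of_le (hcl i hi)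
        (mul_le_mul_of_nonneg_right (csInf_le ⟨0, fun x hx => (hQsub hx).1⟩ hq) (hd i))
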